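/- For every n ≥ 1, the eigenspace {v : (Fin n → Fin 2) → ℂ | M_n.mulVec v = (2^(n−1) : ℂ) • v} is a one-dimensional ℂ-subspace, spanned by GHZ_n; likewise the eigenspace {v | M_n.mulVec v = (−2^(n−1) : ℂ) • v} is one-dimensional, spanned by GHZ'_n. (Only the GHZ state maximally violates the MABK inequality, and only the phase-flipped GHZ state attains the minimal value.) -/

import Mathlib

open Matrix BigOperators

noncomputable section

/-- Pauli X matrix. -/
def pauliX : Matrix (Fin 2) (Fin 2) ℂ := !![0, 1; 1, 0]

/-- Pauli Y matrix. -/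
def pauliY : Matrix (Fin 2) (Fin 2) ℂ := !![0, -Complex.I; Complex.I, 0]

/-- n-fold tensor (Kronecker) product of a family of 2×2 matrices,
defined entrywise by `T(A) f g = ∏ j, (A j) (f j) (g j)`. -/
def tensor {n : ℕ} (A : Fin n → Matrix (Fin 2) (Fin 2) ℂ) :
    Matrix (Fin n → Fin 2) (Fin n → Fin 2) ℂ :=
  Matrix.of fun f g => ∏ j, A j (f j) (g j)

/-- The n-partite MABK operator
`M_n = (1/(2i)) (⊗ⱼ (X + iY) − ⊗ⱼ (X − iY))`. -/
def MABK (n : ℕ) : Matrix (Fin n → Fin 2) (Fin n → Fin 2) ℂ :=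
  (1 / (2 * Complex.I)) •
    (tensor (fun _ : Fin n => pauliX + Complex.I • pauliY)
      - tensor (fun _ : Fin n => pauliX - Complex.I • pauliY))

/-- The n-qubit GHZ state `(|0…0⟩ + i|1…1⟩)/√2`. -/
def GHZ (n : ℕ) : (Fin n → Fin 2) → ℂ :=
  fun f =>
    if f = fun _ => 0 then 1 / (Real.sqrt 2 : ℂ)
    else if f = fun _ => 1 then Complex.I / (Real.sqrt 2 : ℂ)
    else 0

/-- The phase-flipped n-qubit GHZ state `(|0…0⟩ − i|1…1⟩)/√2`. -/
def GHZ' (n : ℕ) : (Fin n → Fin 2) → ℂ :=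
  fun f =>
    if f = fun _ => 0 then 1 / (Real.sqrt 2 : ℂ)
    else if f = fun _ => 1 then -Complex.I / (Real.sqrt 2 : ℂ)
    else 0

lemma plus_entry (a b : Fin 2) :
    (pauliX + Complex.I • pauliY) a b = if a = 0 ∧ b = 1 then 2 else 0 := by
  fin_cases a <;> fin_cases b <;>
    simp [pauliX, pauliY, Complex.I_mul_I] <;> ring_nf <;>
    simp [Complex.I_sq] <;> ring

lemma minus_entry (a b : Fin 2) :
    (pauliX - Complex.I • pauliY) a b = if a = 1 ∧ b = 0 then 2 else 0 := by
  fin_cases a <;> fin_cases b <;>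
    simp [pauliX, pauliY, Complex.I_mul_I] <;> ring_nf <;>
    simp [Complex.I_sq] <;> ring

lemma tensor_plus (n : ℕ) (f g : Fin n → Fin 2) :
    tensor (fun _ : Fin n => pauliX + Complex.I • pauliY) f g =
      if f = (fun _ => 0) ∧ g = (fun _ => 1) then 2 ^ n else 0 := by
  simp only [tensor, Matrix.of_apply, plus_entry]
  by_cases h : f = (fun _ => 0) ∧ g = (fun _ => 1)
  · obtain ⟨h1, h2⟩ := h
    subst h1; subst h2
    simp
  · rw [if_neg h]
    have : ∃ j : Fin n, ¬ (f j = 0 ∧ g j = 1) := by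
      by_contra hc
      push_neg at hc
      exact h ⟨funext fun j => (hc j).1, funext fun j => (hc j).2⟩
    obtain ⟨j, hj⟩ := this
    exact Finset.prod_eq_zero (Finset.mem_univ j) (by rw [if_neg hj])

lemma tensor_minus (n : ℕ) (f g : Fin n → Fin 2) :
    tensor (fun _ : Fin n => pauliX - Complex.I • pauliY) f g =
      if f = (fun _ => 1) ∧ g = (fun _ => 0) then 2 ^ n else 0 := by
  simp only [tensor, Matrix.of_apply, minus_entry]
  by_cases h : f = (fun _ => 1) ∧ g = (fun _ => 0)
  · obtain ⟨h1, h2⟩ := h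
    subst h1; subst h2
    simp
  · rw [if_neg h]
    have : ∃ j : Fin n, ¬ (f j = 1 ∧ g j = 0) := by
      by_contra hc
      push_neg at hc
      exact h ⟨funext fun j => (hc j).1, funext fun j => (hc j).2⟩
    obtain ⟨j, hj⟩ := this
    exact Finset.prod_eq_zero (Finset.mem_univ j) (by rw [if_neg hj])

lemma coeff_eq (n : ℕ) (hn : 1 ≤ n) :
    (1 / (2 * Complex.I)) * 2 ^ n = -Complex.I * 2 ^ (n - 1) := by
  have h2 : (2 : ℂ) ^ n = 2 * 2 ^ (n - 1) := by
    rw [← pow_succ']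
    congr 1
    omega
  rw [h2]
  have hI := Complex.I_ne_zero
  field_simp
  linear_combination Complex.I_sq

lemma mabk_entry (n : ℕ) (hn : 1 ≤ n) (f g : Fin n → Fin 2) :
    MABK n f g =
      if f = (fun _ => 0) ∧ g = (fun _ => 1) then -Complex.I * 2 ^ (n - 1)
      else if f = (fun _ => 1) ∧ g = (fun _ => 0) then Complex.I * 2 ^ (n - 1)
      else 0 := by
  have h01 : ((fun _ : Fin n => (0 : Fin 2))) ≠ (fun _ => 1) := by
    intro h
    have := congrFun h ⟨0, hn⟩
    simp at this
  simp only [MABK, Matrix.smul_apply, Matrix.sub_apply, tensor_plus, tensor_minus,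
    smul_eq_mul]
  by_cases h1 : f = (fun _ => 0) ∧ g = (fun _ => 1)
  · have h2 : ¬ (f = (fun _ => 1) ∧ g = (fun _ => 0)) := by
      rintro ⟨ha, hb⟩
      exact h01 (h1.1 ▸ ha)
    rw [if_pos h1, if_neg h2, if_pos h1, sub_zero, coeff_eq n hn]
  · by_cases h2 : f = (fun _ => 1) ∧ g = (fun _ => 0)
    · rw [if_neg h1, if_pos h2, if_neg h1, if_pos h2, zero_sub, mul_neg,
        coeff_eq n hn]
      ring
    · rw [if_neg h1, if_neg h2, if_neg h1, if_neg h2, sub_zero, mul_zero]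

lemma mabk_mulVec (n : ℕ) (hn : 1 ≤ n) (v : (Fin n → Fin 2) → ℂ)
    (f : Fin n → Fin 2) :
    (MABK n).mulVec v f =
      if f = (fun _ => 0) then -Complex.I * 2 ^ (n - 1) * v (fun _ => 1)
      else if f = (fun _ => 1) then Complex.I * 2 ^ (n - 1) * v (fun _ => 0)
      else 0 := by
  have h01 : ((fun _ : Fin n => (0 : Fin 2))) ≠ (fun _ => 1) := by
    intro h
    have := congrFun h ⟨0, hn⟩
    simp at this
  have h10 : ((fun _ : Fin n => (1 : Fin 2))) ≠ (fun _ => 0) := Ne.symm h01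
  rw [Matrix.mulVec, dotProduct]
  simp only [mabk_entry n hn]
  by_cases h0 : f = (fun _ => 0)
  · subst h0
    rw [if_pos rfl]
    rw [Finset.sum_eq_single (fun _ => (1 : Fin 2))]
    · rw [if_pos ⟨rfl, rfl⟩]
    · intro g _ hg
      rw [if_neg (fun hc => hg hc.2), if_neg (fun hc => h01 hc.1), zero_mul]
    · intro h; exact absurd (Finset.mem_univ _) h
  · rw [if_neg h0]
    by_cases h1 : f = (fun _ => 1)
    · subst h1
      rw [if_pos rfl]
      rw [Finset.sum_eq_single (fun _ => (0 : Fin 2))]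
      · rw [if_neg (fun hc => h10 hc.1), if_pos ⟨rfl, rfl⟩]
      · intro g _ hg
        rw [if_neg (fun hc => h10 hc.1), if_neg (fun hc => hg hc.2), zero_mul]
      · intro h; exact absurd (Finset.mem_univ _) h
    · rw [if_neg h1]
      apply Finset.sum_eq_zero
      intro g _
      rw [if_neg (fun hc => h0 hc.1), if_neg (fun hc => h1 hc.1), zero_mul]

lemma sqrt2_ne_zero : ((Real.sqrt 2 : ℝ) : ℂ) ≠ 0 := by
  simp only [ne_eq, Complex.ofReal_eq_zero]
  positivity

lemma ghz_ne_zero (n : ℕ) : GHZ n ≠ 0 := by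
  intro h
  have := congrFun h (fun _ => 0)
  simp [GHZ, sqrt2_ne_zero] at this

lemma ghz'_ne_zero (n : ℕ) : GHZ' n ≠ 0 := by
  intro h
  have := congrFun h (fun _ => 0)
  simp [GHZ', sqrt2_ne_zero] at this

lemma ghz_eigen (n : ℕ) (hn : 1 ≤ n) :
    (MABK n).mulVec (GHZ n) = (2 ^ (n - 1) : ℂ) • GHZ n := by
  have h01 : ((fun _ : Fin n => (0 : Fin 2))) ≠ (fun _ => 1) := by
    intro h
    have := congrFun h ⟨0, hn⟩
    simp at this
  have h10 : ((fun _ : Fin n => (1 : Fin 2))) ≠ (fun _ => 0) := Ne.symm h01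
  have g0 : GHZ n (fun _ => 0) = 1 / (Real.sqrt 2 : ℂ) := by simp [GHZ]
  have g1 : GHZ n (fun _ => 1) = Complex.I / (Real.sqrt 2 : ℂ) := by
    simp [GHZ, h10]
  funext f
  rw [mabk_mulVec n hn]
  simp only [Pi.smul_apply, smul_eq_mul]
  by_cases h0 : f = (fun _ => 0)
  · rw [if_pos h0, h0, g0, g1]
    linear_combination (-(2:ℂ) ^ (n - 1) / (Real.sqrt 2 : ℂ)) * Complex.I_sq
  · rw [if_neg h0]
    by_cases h1 : f = (fun _ => 1)
    · rw [if_pos h1, h1, g1, g0]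
      ring
    · rw [if_neg h1]
      have hz : GHZ n f = 0 := by simp [GHZ, h0, h1]
      rw [hz, mul_zero]

lemma ghz'_eigen (n : ℕ) (hn : 1 ≤ n) :
    (MABK n).mulVec (GHZ' n) = (-(2 ^ (n - 1)) : ℂ) • GHZ' n := by
  have h01 : ((fun _ : Fin n => (0 : Fin 2))) ≠ (fun _ => 1) := by
    intro h
    have := congrFun h ⟨0, hn⟩
    simp at this
  have h10 : ((fun _ : Fin n => (1 : Fin 2))) ≠ (fun _ => 0) := Ne.symm h01
  have g0 : GHZ' n (fun _ => 0) = 1 / (Real.sqrt 2 : ℂ) := by simp [GHZ']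
  have g1 : GHZ' n (fun _ => 1) = -Complex.I / (Real.sqrt 2 : ℂ) := by
    simp [GHZ', h10]
  funext f
  rw [mabk_mulVec n hn]
  simp only [Pi.smul_apply, smul_eq_mul]
  by_cases h0 : f = (fun _ => 0)
  · rw [if_pos h0, h0, g0, g1]
    linear_combination ((2:ℂ) ^ (n - 1) / (Real.sqrt 2 : ℂ)) * Complex.I_sq
  · rw [if_neg h0]
    by_cases h1 : f = (fun _ => 1)
    · rw [if_pos h1, h1, g1, g0]
      ring
    · rw [if_neg h1]
      have hz : GHZ' n f = 0 := by simp [GHZ', h0, h1]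
      rw [hz, mul_zero]

/-- The eigenspaces of the MABK operator for the extreme eigenvalues ±2^(n−1)
are one-dimensional, spanned by the GHZ and phase-flipped GHZ states. -/
theorem mabk_eigenspaces (n : ℕ) (hn : 1 ≤ n) :
    ({v : (Fin n → Fin 2) → ℂ | (MABK n).mulVec v = (2 ^ (n - 1) : ℂ) • v}
        = ↑(Submodule.span ℂ {GHZ n})
      ∧ Module.finrank ℂ (Submodule.span ℂ {GHZ n}) = 1) ∧
    ({v : (Fin n → Fin 2) → ℂ | (MABK n).mulVec v = (-(2 ^ (n - 1)) : ℂ) • v}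
        = ↑(Submodule.span ℂ {GHZ' n})
      ∧ Module.finrank ℂ (Submodule.span ℂ {GHZ' n}) = 1) := by
  have h01 : ((fun _ : Fin n => (0 : Fin 2))) ≠ (fun _ => 1) := by
    intro h
    have := congrFun h ⟨0, hn⟩
    simp at this
  have h10 : ((fun _ : Fin n => (1 : Fin 2))) ≠ (fun _ => 0) := Ne.symm h01
  have hlam : ((2 : ℂ) ^ (n - 1)) ≠ 0 := pow_ne_zero _ two_ne_zero
  have hs2 := sqrt2_ne_zero
  constructor
  · constructor
    · ext v
      simp only [Set.mem_setOf_eq, SetLike.mem_coe, Submodule.mem_span_singleton]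
      constructor
      · intro h
        refine ⟨(Real.sqrt 2 : ℂ) * v (fun _ => 0), ?_⟩
        have key : ∀ f, (MABK n).mulVec v f = 2 ^ (n - 1) * v f := by
          intro f
          rw [h]; simp
        have h2 : v (fun _ => 1) = Complex.I * v (fun _ => 0) := by
          have hk := key (fun _ => 1)
          rw [mabk_mulVec n hn, if_neg h10, if_pos rfl] at hk
          apply mul_left_cancel₀ hlam
          linear_combination -hk
        funext f
        simp only [Pi.smul_apply, smul_eq_mul, GHZ]
        by_cases hf0 : f = (fun _ => 0)
        · subst hf0
          rw [if_pos rfl]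
          field_simp
        · rw [if_neg hf0]
          by_cases hf1 : f = (fun _ => 1)
          · subst hf1
            rw [if_pos rfl, h2]
            field_simp
          · rw [if_neg hf1]
            have hk := key f
            rw [mabk_mulVec n hn, if_neg hf0, if_neg hf1] at hk
            have hv : v f = 0 := by
              rcases mul_eq_zero.mp hk.symm with h' | h'
              · exact absurd h' hlam
              · exact h'
            rw [hv, mul_zero]
      · rintro ⟨c, rfl⟩
        rw [Matrix.mulVec_smul, ghz_eigen n hn, smul_comm]
    · exact finrank_span_singleton (ghz_ne_zero n)
  · constructor
    · ext v
      simp only [Set.mem_setOf_eq, SetLike.mem_coe, Submodule.mem_span_singleton]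
      constructor
      · intro h
        refine ⟨(Real.sqrt 2 : ℂ) * v (fun _ => 0), ?_⟩
        have key : ∀ f, (MABK n).mulVec v f = -(2 ^ (n - 1)) * v f := by
          intro f
          rw [h]; simp
        have h2 : v (fun _ => 1) = -Complex.I * v (fun _ => 0) := by
          have hk := key (fun _ => 1)
          rw [mabk_mulVec n hn, if_neg h10, if_pos rfl] at hk
          apply mul_left_cancel₀ hlam
          linear_combination hk
        funext f
        simp only [Pi.smul_apply, smul_eq_mul, GHZ']
        by_cases hf0 : f = (fun _ => 0)
        · subst hf0
          rw [if_pos rfl]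
          field_simp
        · rw [if_neg hf0]
          by_cases hf1 : f = (fun _ => 1)
          · subst hf1
            rw [if_pos rfl, h2]
            field_simp
          · rw [if_neg hf1]
            have hk := key f
            rw [mabk_mulVec n hn, if_neg hf0, if_neg hf1] at hk
            have hv : v f = 0 := by
              rcases mul_eq_zero.mp hk.symm with h' | h'
              · exact absurd (neg_eq_zero.mp h') hlam
              · exact h'
            rw [hv, mul_zero]
      · rintro ⟨c, rfl⟩
        rw [Matrix.mulVec_smul, ghz'_eigen n hn, smul_comm]
    · exact finrank_span_singleton (ghz'_ne_zero n)
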